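/- Let E be a finite-dimensional real normed vector space and C ⊆ E a convex cone (i.e., closed under multiplication by positive scalars and under addition). Then the closure of C contains no line (equivalently, C is 'strict') if and only if there exists a continuous linear functional u on E such that C ⊆ {x ∈ E : u(x) ≥ ‖x‖}. -/

import Mathlib

open Set Finset


lemma my_dite_sum {M : Type*} [AddCommMonoid M] {α : Type*} (t : Finset α) {n : ℕ}
    (hcard : #t ≤ n) (F : {x // x ∈ t} → M) :
    ∑ i : Fin n, (if h : (i : ℕ) < #t then F (t.equivFin.symm ⟨i, h⟩) else 0)
      = ∑ a ∈ t.attach, F a := by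
  rw [Fin.sum_univ_eq_sum_range
    (fun k => if h : k < #t then F (t.equivFin.symm ⟨k, h⟩) else 0) n]
  have h1 : ∑ k ∈ Finset.range n, (if h : k < #t then F (t.equivFin.symm ⟨k, h⟩) else 0)
      = ∑ k ∈ Finset.range #t, (if h : k < #t then F (t.equivFin.symm ⟨k, h⟩) else 0) := by
    symm
    apply Finset.sum_subset (Finset.range_subset_range.2 hcard)
    intro k _ hk
    rw [dif_neg (by simpa using hk)]
  rw [h1, ← Fin.sum_univ_eq_sum_range
    (fun k => if h : k < #t then F (t.equivFin.symm ⟨k, h⟩) else 0)]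
  have h2 : ∀ i : Fin #t,
      (if h : (i : ℕ) < #t then F (t.equivFin.symm ⟨i, h⟩) else 0) = F (t.equivFin.symm i) := by
    intro i
    rw [dif_pos i.isLt]
  rw [Finset.sum_congr rfl (fun i _ => h2 i), Equiv.sum_comp t.equivFin.symm F,
    Finset.univ_eq_attach]

lemma my_isCompact_convexHull {E : Type*} [NormedAddCommGroup E] [NormedSpace ℝ E]
    [FiniteDimensional ℝ E] {s : Set E} (hs : IsCompact s) :
    IsCompact (convexHull ℝ s) := by
  rcases s.eq_empty_or_nonempty with rfl | ⟨x₀, hx₀⟩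
  · simp
  set n := Module.finrank ℝ E + 1 with hn
  set g : (Fin n → ℝ) × (Fin n → E) → E := fun p => ∑ i, p.1 i • p.2 i with hg
  have hgc : Continuous g := by
    apply continuous_finset_sum
    intro i _
    exact ((continuous_apply i).comp continuous_fst).smul
      ((continuous_apply i).comp continuous_snd)
  set T : Set ((Fin n → ℝ) × (Fin n → E)) :=
    (stdSimplex ℝ (Fin n)) ×ˢ (Set.univ.pi fun _ => s) with hT
  have hTc : IsCompact T :=
    (isCompact_stdSimplex (𝕜 := ℝ) (ι := Fin n)).prod (isCompact_univ_pi fun _ => hs)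
  have himg : g '' T = convexHull ℝ s := by
    apply Set.Subset.antisymm
    · rintro _ ⟨⟨w, z⟩, ⟨⟨hw0, hw1⟩, hz⟩, rfl⟩
      exact mem_convexHull_of_exists_fintype w z hw0 hw1
        (fun i => hz i (Set.mem_univ i)) rfl
    · intro x hx
      classical
      set t := Caratheodory.minCardFinsetOfMemConvexHull hx with ht
      have hts : ↑t ⊆ s := Caratheodory.minCardFinsetOfMemConvexHull_subseteq hx
      have hxt : x ∈ convexHull ℝ (t : Set E) :=
        Caratheodory.mem_minCardFinsetOfMemConvexHull hx
      have htne : t.Nonempty := Caratheodory.minCardFinsetOfMemConvexHull_nonempty hx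
      have hcard : #t ≤ n := by
        have h1 :=
          (Caratheodory.affineIndependent_minCardFinsetOfMemConvexHull hx).card_le_finrank_succ
        rw [Fintype.card_coe] at h1
        exact h1.trans (Nat.succ_le_succ (Submodule.finrank_le _))
      rw [Finset.convexHull_eq] at hxt
      obtain ⟨w, hw0, hw1, hwx⟩ := hxt
      obtain ⟨y₀, hy₀⟩ := htne
      set W : Fin n → ℝ :=
        fun i => if h : (i : ℕ) < #t then w (t.equivFin.symm ⟨i, h⟩) else 0 with hW
      set Z : Fin n → E :=
        fun i => if h : (i : ℕ) < #t then ((t.equivFin.symm ⟨i, h⟩ : t) : E) else y₀ with hZ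
      refine ⟨(W, Z), ⟨⟨?_, ?_⟩, ?_⟩, ?_⟩
      · intro i
        simp only [hW]
        split
        · exact hw0 _ (Subtype.mem _)
        · exact le_rfl
      · rw [hW, my_dite_sum t hcard (fun a => w a), Finset.sum_attach t w]
        exact hw1
      · intro i _
        simp only [hZ]
        split
        · exact hts (Subtype.mem _)
        · exact hts hy₀
      · show ∑ i : Fin n, W i • Z i = x
        have hp : ∀ i : Fin n, W i • Z i =
            (if h : (i : ℕ) < #t then
              (fun a : t => w a • (a : E)) (t.equivFin.symm ⟨i, h⟩) else 0) := by
          intro i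
          simp only [hW, hZ]
          split
          · rfl
          · rw [zero_smul]
        rw [Finset.sum_congr rfl (fun i _ => hp i),
          my_dite_sum t hcard (fun a : t => w a • (a : E)),
          Finset.sum_attach t (fun y => w y • y)]
        rw [Finset.centerMass_eq_of_sum_1 _ _ hw1] at hwx
        simpa using hwx
  rw [← himg]
  exact hTc.image hgc


/-- A convex cone `C` in a finite-dimensional real normed vector space has
closure containing no line (i.e. is strict) iff there is a continuous linear functional `u`
with `C ⊆ {x | u x ≥ ‖x‖}`. -/
theorem stmt0 {E : Type*} [NormedAddCommGroup E] [NormedSpace ℝ E]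
    [FiniteDimensional ℝ E] (hdim : 0 < Module.finrank ℝ E) (C : Set E)
    (hscale : ∀ r : ℝ, 0 < r → ∀ x ∈ C, r • x ∈ C)
    (hadd : ∀ x ∈ C, ∀ y ∈ C, x + y ∈ C) :
    (¬ ∃ (p v : E), v ≠ 0 ∧ ∀ t : ℝ, p + t • v ∈ closure C) ↔
      ∃ u : E →L[ℝ] ℝ, ∀ x ∈ C, ‖x‖ ≤ u x := by
  set D := closure C with hD
  have hDclosed : IsClosed D := isClosed_closure
  have hDscale : ∀ r : ℝ, 0 < r → ∀ x ∈ D, r • x ∈ D := fun r hr x hx =>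
    map_mem_closure (continuous_const_smul r) hx (fun y hy => hscale r hr y hy)
  have hDadd : ∀ x ∈ D, ∀ y ∈ D, x + y ∈ D := fun x hx y hy =>
    map_mem_closure₂ continuous_add hx hy (fun a ha b hb => hadd a ha b hb)
  constructor
  · intro hline
    by_cases hCne : C.Nonempty
    swap
    · exact ⟨0, fun x hx => absurd ⟨x, hx⟩ hCne⟩
    obtain ⟨c, hc⟩ := hCne
    have h0D : (0 : E) ∈ D := by
      have h1 : Filter.Tendsto (fun k : ℕ => ((k : ℝ) + 1)⁻¹ • c) Filter.atTop (nhds 0) := by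
        have h := tendsto_one_div_add_atTop_nhds_zero_nat (𝕜 := ℝ)
        have h2 := h.smul_const c
        simpa [one_div] using h2
      exact mem_closure_of_tendsto h1 (Filter.Eventually.of_forall fun k =>
        hscale _ (inv_pos.2 (Nat.cast_add_one_pos k)) c hc)
    set K : Set E := D ∩ Metric.sphere (0 : E) 1 with hK
    have hKc : IsCompact K := (isCompact_sphere 0 1).inter_left hDclosed
    set K' := convexHull ℝ K with hK'
    have hK'c : IsCompact K' := my_isCompact_convexHull hKc
    have h0K' : (0 : E) ∉ K' := by
      intro h0
      rw [hK', mem_convexHull_iff_exists_fintype] at h0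
      obtain ⟨ι, _, w, z, hw0, hw1, hzK, hsum⟩ := h0
      have hjex : ∃ j, 0 < w j := by
        by_contra hno
        push_neg at hno
        have : ∑ i, w i = 0 := Finset.sum_eq_zero fun i _ => le_antisymm (hno i) (hw0 i)
        rw [hw1] at this; exact one_ne_zero this
      obtain ⟨j, hj⟩ := hjex
      classical
      have hrest : ∑ i ∈ Finset.univ.erase j, w i • z i ∈ D := by
        have : ∀ s : Finset ι, ∑ i ∈ s, w i • z i ∈ D := by
          intro s
          induction s using Finset.induction with
          | empty => simpa using h0D
          | @insert a s ha ih =>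
            rw [Finset.sum_insert ha]
            rcases eq_or_lt_of_le (hw0 a) with h | h
            · rw [← h, zero_smul, zero_add]; exact ih
            · exact hDadd _ (hDscale _ h _ (hzK a).1) _ ih
        exact this _
      have hsplit : w j • z j + ∑ i ∈ Finset.univ.erase j, w i • z i = 0 := by
        rw [← hsum, ← Finset.add_sum_erase _ _ (Finset.mem_univ j)]
      have hneg : -z j ∈ D := by
        have h1 : (w j)⁻¹ • (∑ i ∈ Finset.univ.erase j, w i • z i) ∈ D :=
          hDscale _ (inv_pos.2 hj) _ hrest
        have h2 : (w j)⁻¹ • (∑ i ∈ Finset.univ.erase j, w i • z i) = -z j := by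
          have : (∑ i ∈ Finset.univ.erase j, w i • z i) = -(w j • z j) := by
            linear_combination (norm := abel) hsplit
          rw [this, smul_neg, smul_smul, inv_mul_cancel₀ hj.ne', one_smul]
        rwa [h2] at h1
      have hzj : z j ∈ D := (hzK j).1
      have hzjne : z j ≠ 0 := by
        have := (hzK j).2
        simp only [Metric.mem_sphere, dist_zero_right] at this
        intro h; rw [h, norm_zero] at this; exact one_ne_zero this.symm
      apply hline
      refine ⟨0, z j, hzjne, fun t => ?_⟩
      rw [zero_add]
      rcases lt_trichotomy t 0 with ht | rfl | ht
      · have : t • z j = (-t) • (-z j) := by rw [neg_smul, smul_neg, neg_neg]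
        rw [this]
        exact hDscale _ (by linarith) _ hneg
      · simpa using h0D
      · exact hDscale _ ht _ hzj
    obtain ⟨f, a, hfa, haf⟩ := geometric_hahn_banach_point_closed
      (convex_convexHull ℝ K) hK'c.isClosed h0K'
    have ha : 0 < a := by simpa using hfa
    refine ⟨a⁻¹ • f, fun x hx => ?_⟩
    rcases eq_or_ne x 0 with rfl | hxne
    · simp
    · have hxn : 0 < ‖x‖ := norm_pos_iff.2 hxne
      have hxK : ‖x‖⁻¹ • x ∈ K := by
        constructor
        · exact subset_closure (hscale _ (inv_pos.2 hxn) x hx)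
        · simp [norm_smul, abs_of_pos (inv_pos.2 hxn), inv_mul_cancel₀ hxn.ne']
      have := haf _ (subset_convexHull ℝ K hxK)
      rw [map_smul, smul_eq_mul] at this
      have hfx : a * ‖x‖ < f x := by
        calc a * ‖x‖ < (‖x‖⁻¹ * f x) * ‖x‖ := mul_lt_mul_of_pos_right this hxn
          _ = f x := by field_simp
      have : (a⁻¹ • f) x = a⁻¹ * f x := by
        simp [ContinuousLinearMap.smul_apply, smul_eq_mul]
      rw [this]
      rw [le_inv_mul_iff₀ ha]
      exact hfx.le
  · rintro ⟨u, hu⟩ ⟨p, v, hv, hl⟩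
    have hu' : ∀ x ∈ D, ‖x‖ ≤ u x := fun x hx =>
      closure_minimal (fun y hy => hu y hy)
        (isClosed_le continuous_norm u.continuous) hx
    have key : ∀ t : ℝ, 0 < t → t * ‖v‖ ≤ u p := by
      intro t ht
      have h1 := hu' _ (hl t)
      have h2 := hu' _ (hl (-t))
      have hdiff : (p + t • v) - (p + (-t) • v) = (2 * t) • v := by module
      have hnorm := norm_sub_le (p + t • v) (p + (-t) • v)
      rw [hdiff, norm_smul, Real.norm_eq_abs, abs_of_pos (by linarith)] at hnorm
      simp only [map_add, map_smul, smul_eq_mul] at h1 h2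
      nlinarith [h1, h2, hnorm]
    have hvpos : 0 < ‖v‖ := norm_pos_iff.2 hv
    have hup : 0 ≤ u p := le_trans (norm_nonneg p) (by simpa using hu' _ (hl 0))
    have hfin := key ((u p + 1) / ‖v‖) (by positivity)
    rw [div_mul_cancel₀ _ hvpos.ne'] at hfin
    linarith
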